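/- For any trace σ and any downward-closed (w.r.t. ≤_SHB) set S ⊆ Events(σ), the sequence ρ obtained by listing S in trace order of σ is a correct reordering of σ. -/

import Mathlib

/- A model of concurrent program traces: events are read/write/acquire/release
operations performed by threads; a trace is a finite sequence of events,
identified by their indices. -/

inductive Op where
  | read  (x : ℕ)
  | write (x : ℕ)
  | acq (l : ℕ)
  | rel (l : ℕ)
deriving DecidableEq

structure Event where
  thread : ℕ
  op : Op
deriving DecidableEq

def evAt (σ : List Event) (i : ℕ) : Event := σ.getD i ⟨0, Op.read 0⟩

def threadOf (σ : List Event) (i : ℕ) : ℕ := (evAt σ i).thread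

def isAcq (σ : List Event) (l i : ℕ) : Prop := i < σ.length ∧ (evAt σ i).op = Op.acq l
def isRel (σ : List Event) (l i : ℕ) : Prop := i < σ.length ∧ (evAt σ i).op = Op.rel l
def isRead (σ : List Event) (x i : ℕ) : Prop := i < σ.length ∧ (evAt σ i).op = Op.read x
def isWrite (σ : List Event) (x i : ℕ) : Prop := i < σ.length ∧ (evAt σ i).op = Op.write x

/-- `e` is an event on lock `l` (an acquire or release of `l`). -/
def onLock (l : ℕ) (e : Event) : Bool := decide (e.op = Op.acq l ∨ e.op = Op.rel l)

/-- Thread order: `i` and `j` are events of the same thread with `i` not after `j`. -/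
def TO (σ : List Event) (i j : ℕ) : Prop :=
  i ≤ j ∧ j < σ.length ∧ threadOf σ i = threadOf σ j

/-- Alternating sequence of matched acquire/release pairs on lock `l`, each pair
performed by a single thread, with at most one unmatched acquire at the end. -/
inductive LockAlt (l : ℕ) : List Event → Prop
  | nil : LockAlt l []
  | pending (t : ℕ) : LockAlt l [⟨t, Op.acq l⟩]
  | pair (t : ℕ) {rest : List Event} : LockAlt l rest →
      LockAlt l (⟨t, Op.acq l⟩ :: ⟨t, Op.rel l⟩ :: rest)

/-- Well-formedness of an event sequence: for each lock, the projection alternates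
matched acquire/release pairs, with at most one pending acquire. -/
def WellFormedEvents (es : List Event) : Prop := ∀ l, LockAlt l (es.filter (onLock l))

/-- Words of the language `(Σ_t ⟨t, acq(l)⟩ · ⟨t, rel(l)⟩)*`. -/
inductive PairsLang (l : ℕ) : List Event → Prop
  | nil : PairsLang l []
  | pair (t : ℕ) {rest : List Event} : PairsLang l rest →
      PairsLang l (⟨t, Op.acq l⟩ :: ⟨t, Op.rel l⟩ :: rest)

/-- Lock semantics: for every lock `l`, the projection of the trace onto events on `l`
is a prefix of a word in the language `(Σ_t ⟨t, acq(l)⟩ · ⟨t, rel(l)⟩)*`. -/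
def LockSem (σ : List Event) : Prop :=
  ∀ l, ∃ w, PairsLang l w ∧ (σ.filter (onLock l)) <+: w

/-- Thread `t` holds lock `l` after the prefix of length `n`: the last event of the
prefix on lock `l` is an acquire of `l` by `t`. -/
def Holds (σ : List Event) (n t l : ℕ) : Prop :=
  ∃ i, i < n ∧ isAcq σ l i ∧ threadOf σ i = t ∧
    ∀ j, i < j → j < n → j < σ.length → onLock l (evAt σ j) = false

/-- `r` is the matching release of the acquire `a`: same thread, same lock, with no
intervening event on that lock in between. -/
def MatchRel (σ : List Event) (a r : ℕ) : Prop :=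
  ∃ l, isAcq σ l a ∧ isRel σ l r ∧ a < r ∧ threadOf σ a = threadOf σ r ∧
    ∀ k, a < k → k < r → ¬ (isAcq σ l k ∨ isRel σ l k)

/-- `i` is the last write (on the common variable) before the read `j` in `σ`. -/
def LastWrite (σ : List Event) (i j : ℕ) : Prop :=
  ∃ x, isWrite σ x i ∧ isRead σ x j ∧ i < j ∧ ∀ k, i < k → k < j → ¬ isWrite σ x k

/-- `i` is the immediate thread-order predecessor of `j` in `σ`. -/
def Prev (σ : List Event) (j i : ℕ) : Prop :=
  i < j ∧ j < σ.length ∧ threadOf σ i = threadOf σ j ∧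
    ∀ k, i < k → k < j → threadOf σ k ≠ threadOf σ j

/-- `S` is downward-closed with respect to thread order. -/
def TODownClosed (σ : List Event) (S : Set ℕ) : Prop :=
  ∀ i j, TO σ i j → j ∈ S → i ∈ S

/-- `S` is `(TO, lw)`-closed. -/
def TOLWClosed (σ : List Event) (S : Set ℕ) : Prop :=
  TODownClosed σ S ∧ ∀ i j, LastWrite σ i j → j ∈ S → i ∈ S

/-- `S` is sync-preserving closed. -/
def SPClosed (σ : List Event) (S : Set ℕ) : Prop :=
  TOLWClosed σ S ∧
    ∀ l a1 a2 r1, isAcq σ l a1 → isAcq σ l a2 → a1 < a2 →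
      a1 ∈ S → a2 ∈ S → MatchRel σ a1 r1 → r1 ∈ S

/-- The sync-preserving closure of `S`. -/
def SPClosure (σ : List Event) (S : Set ℕ) : Set ℕ :=
  ⋂₀ {S' : Set ℕ | S ⊆ S' ∧ SPClosed σ S'}

def PrevSet (σ : List Event) (j : ℕ) : Set ℕ := {i | Prev σ j i}

def SPIdeal (σ : List Event) (e1 e2 : ℕ) : Set ℕ :=
  SPClosure σ (PrevSet σ e1 ∪ PrevSet σ e2)

/-- `i` occurs before `j` in the reordering `ρ` (a list of σ-indices). -/
def RBefore (ρ : List ℕ) (i j : ℕ) : Prop :=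
  i ∈ ρ ∧ j ∈ ρ ∧ ρ.idxOf i < ρ.idxOf j

/-- `i` is the last write before the read `j` in the reordering `ρ`. -/
def LastWriteIn (σ : List Event) (ρ : List ℕ) (i j : ℕ) : Prop :=
  ∃ x, isWrite σ x i ∧ isRead σ x j ∧ RBefore ρ i j ∧
    ∀ k, isWrite σ x k → ¬ (RBefore ρ i k ∧ RBefore ρ k j)

/-- `ρ` (a duplicate-free list of σ-indices, read as a trace) is a correct reordering
of `σ`: a well-formed trace over a subset of events of `σ` that is downward-closed
under thread order, respects thread order, and in which every read observes the
same last write as in `σ`. -/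
def CorrectReordering (σ : List Event) (ρ : List ℕ) : Prop :=
  ρ.Nodup ∧ (∀ i ∈ ρ, i < σ.length) ∧
  WellFormedEvents (ρ.map (evAt σ)) ∧
  (∀ i j, TO σ i j → j ∈ ρ → i ∈ ρ) ∧
  (∀ i j, i ∈ ρ → j ∈ ρ → i ≠ j → TO σ i j → RBefore ρ i j) ∧
  (∀ j x, isRead σ x j → j ∈ ρ → ∀ i, LastWriteIn σ ρ i j ↔ LastWrite σ i j)

/-- Event `e` of `σ` is σ-enabled in the reordering `ρ`. -/
def EnabledIn (σ : List Event) (ρ : List ℕ) (e : ℕ) : Prop :=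
  e < σ.length ∧ e ∉ ρ ∧ ∀ i, i ≠ e → TO σ i e → i ∈ ρ

/-- `ρ` is sync-preserving w.r.t. `σ`: any two same-lock acquires occurring in `ρ`
appear in the same relative order as in `σ`. -/
def SyncPreserving (σ : List Event) (ρ : List ℕ) : Prop :=
  ∀ l a1 a2, isAcq σ l a1 → isAcq σ l a2 → a1 ∈ ρ → a2 ∈ ρ →
    (RBefore ρ a1 a2 ↔ a1 < a2)

/-- Conflicting events: different threads, common variable, at least one write. -/
def Conflict (σ : List Event) (i j : ℕ) : Prop :=
  i < σ.length ∧ j < σ.length ∧ threadOf σ i ≠ threadOf σ j ∧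
    ∃ x, (isWrite σ x i ∧ (isWrite σ x j ∨ isRead σ x j)) ∨
         (isRead σ x i ∧ isWrite σ x j)

/-- `(e1, e2)` is a sync-preserving race of `σ`. -/
def SPRace (σ : List Event) (e1 e2 : ℕ) : Prop :=
  Conflict σ e1 e2 ∧ ∃ ρ : List ℕ, CorrectReordering σ ρ ∧ SyncPreserving σ ρ ∧
    EnabledIn σ ρ e1 ∧ EnabledIn σ ρ e2

/-- Happens-before: smallest transitive relation containing thread order and
ordering each release of a lock before every later acquire of that lock. -/
inductive HB (σ : List Event) : ℕ → ℕ → Prop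
  | to {i j : ℕ} : TO σ i j → HB σ i j
  | relacq {l i j : ℕ} : isRel σ l i → isAcq σ l j → i < j → HB σ i j
  | trans {i j k : ℕ} : HB σ i j → HB σ j k → HB σ i k

/-- Schedulable-happens-before: smallest transitive relation containing HB and
ordering each write of a variable before every later read of that variable. -/
inductive SHB (σ : List Event) : ℕ → ℕ → Prop
  | hb {i j : ℕ} : HB σ i j → SHB σ i j
  | wr {x i j : ℕ} : isWrite σ x i → isRead σ x j → i < j → SHB σ i j
  | trans {i j k : ℕ} : SHB σ i j → SHB σ j k → SHB σ i k


section Aux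

lemma idx_mono : ∀ (L : List ℕ), L.Pairwise (·<·) → ∀ i j, i ∈ L → j ∈ L → i < j →
    L.idxOf i < L.idxOf j := by
  intro L
  induction L with
  | nil => intro _ i j hi; simp at hi
  | cons x L ih =>
    intro hs i j hi hj hij
    rcases List.pairwise_cons.mp hs with ⟨hx, hs'⟩
    by_cases hix : i = x
    · have hjx : x ≠ j := by omega
      rw [hix, List.idxOf_cons_self, List.idxOf_cons_ne L hjx]
      omega
    · have hi' : i ∈ L := by rcases List.mem_cons.mp hi with h | h; exact absurd h hix; exact h
      have hxi : x < i := hx i hi'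
      have hjx : x ≠ j := by omega
      have hj' : j ∈ L := by
        rcases List.mem_cons.mp hj with h | h
        · omega
        · exact h
      rw [List.idxOf_cons_ne L (Ne.symm hix), List.idxOf_cons_ne L hjx]
      have := ih hs' i j hi' hj' hij
      omega

lemma rbefore_iff (L : List ℕ) (hs : L.Pairwise (·<·)) (i j : ℕ) :
    RBefore L i j ↔ i ∈ L ∧ j ∈ L ∧ i < j := by
  constructor
  · rintro ⟨hi, hj, hlt⟩
    refine ⟨hi, hj, ?_⟩
    rcases lt_trichotomy i j with h | h | h
    · exact h
    · subst h; omega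
    · exact absurd (idx_mono L hs j i hj hi h) (by omega)
  · rintro ⟨hi, hj, hlt⟩
    exact ⟨hi, hj, idx_mono L hs i j hi hj hlt⟩

lemma map_evAt_range (σ : List Event) : (List.range σ.length).map (evAt σ) = σ := by
  apply List.ext_getElem
  · simp
  · intro i h1 h2
    simp only [List.getElem_map, List.getElem_range, evAt]
    simp at h1
    rw [List.getD_eq_getElem σ _ h1]

lemma blocked (σ : List Event) (S : Set ℕ) [DecidablePred (· ∈ S)]
    (hdc : ∀ i j, SHB σ i j → j ∈ S → i ∈ S) (l : ℕ) :
    ∀ w, PairsLang l w → ∀ L : List ℕ, L.Pairwise (·<·) → (∀ k ∈ L, k < σ.length) →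
      L.map (evAt σ) <+: w → ∀ b, isRel σ l b → b ∉ S → (∀ k ∈ L, b < k) →
      L.filter (fun i => decide (i ∈ S)) = [] := by
  intro w hw
  induction hw with
  | nil =>
    intro L _ _ hpre
    have : L.map (evAt σ) = [] := List.prefix_nil.mp hpre
    have : L = [] := by simpa using this
    simp [this]
  | pair t hw' ih =>
    intro L hs hlen hpre b hbrel hbS hblt
    match L with
    | [] => rfl
    | a :: L2 =>
      rw [List.map_cons] at hpre
      rcases List.cons_prefix_cons.mp hpre with ⟨ha, hpre2⟩
      have haacq : isAcq σ l a := ⟨hlen a (by simp), by rw [ha]⟩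
      have haS : a ∉ S := fun h => hbS (hdc b a (SHB.hb (HB.relacq hbrel haacq (hblt a (by simp)))) h)
      match L2 with
      | [] => simp [List.filter, haS]
      | r :: L3 =>
        rw [List.map_cons] at hpre2
        rcases List.cons_prefix_cons.mp hpre2 with ⟨hr, hpre3⟩
        rcases List.pairwise_cons.mp hs with ⟨halt, hs2⟩
        rcases List.pairwise_cons.mp hs2 with ⟨hrlt, hs3⟩
        have hrS : r ∉ S := by
          intro h
          apply haS
          refine hdc a r (SHB.hb (HB.to ⟨le_of_lt (halt r (by simp)), hlen r (by simp), ?_⟩)) h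
          simp [threadOf, ha, hr]
        have h3 : L3.filter (fun i => decide (i ∈ S)) = [] := by
          refine ih L3 hs3 (fun k hk => hlen k (by simp [hk])) hpre3 b hbrel hbS ?_
          intro k hk
          exact lt_trans (hblt a (by simp)) (halt k (by simp [hk]))
        simp [List.filter, haS, hrS, h3]

lemma alt_lemma (σ : List Event) (S : Set ℕ) [DecidablePred (· ∈ S)]
    (hdc : ∀ i j, SHB σ i j → j ∈ S → i ∈ S) (l : ℕ) :
    ∀ w, PairsLang l w → ∀ L : List ℕ, L.Pairwise (·<·) → (∀ k ∈ L, k < σ.length) →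
      L.map (evAt σ) <+: w →
      LockAlt l ((L.filter (fun i => decide (i ∈ S))).map (evAt σ)) := by
  intro w hw
  induction hw with
  | nil =>
    intro L _ _ hpre
    have : L = [] := by simpa using List.prefix_nil.mp hpre
    simp [this]
    exact LockAlt.nil
  | pair t hw' ih =>
    intro L hs hlen hpre
    match L with
    | [] => exact LockAlt.nil
    | a :: L2 =>
      rw [List.map_cons] at hpre
      rcases List.cons_prefix_cons.mp hpre with ⟨ha, hpre2⟩
      match L2 with
      | [] =>
        by_cases haS : a ∈ S
        · simp [List.filter, haS, ha]
          exact LockAlt.pending t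
        · simp [List.filter, haS]
          exact LockAlt.nil
      | r :: L3 =>
        rw [List.map_cons] at hpre2
        rcases List.cons_prefix_cons.mp hpre2 with ⟨hr, hpre3⟩
        rcases List.pairwise_cons.mp hs with ⟨halt, hs2⟩
        rcases List.pairwise_cons.mp hs2 with ⟨hrlt, hs3⟩
        have hlen3 : ∀ k ∈ L3, k < σ.length := fun k hk => hlen k (by simp [hk])
        by_cases hrS : r ∈ S
        · have haS : a ∈ S := by
            refine hdc a r (SHB.hb (HB.to ⟨le_of_lt (halt r (by simp)), hlen r (by simp), ?_⟩)) hrS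
            simp [threadOf, ha, hr]
          have := ih L3 hs3 hlen3 hpre3
          simpa [List.filter, haS, hrS, ha, hr] using LockAlt.pair t this
        · have hbrel : isRel σ l r := ⟨hlen r (by simp), by rw [hr]⟩
          have h3 : L3.filter (fun i => decide (i ∈ S)) = [] :=
            blocked σ S hdc l _ hw' L3 hs3 hlen3 hpre3 r hbrel hrS
              (fun k hk => hrlt k (by simp [hk]))
          by_cases haS : a ∈ S
          · simp [List.filter, haS, hrS, h3, ha]
            exact LockAlt.pending t
          · simp [List.filter, haS, hrS, h3]
            exact LockAlt.nil

end Aux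

/-- for any downward-closed (w.r.t. SHB) set `S` of events of `σ`,
listing `S` in trace order of `σ` yields a correct reordering of `σ`. -/
theorem stmt17 (σ : List Event) (hWF : LockSem σ) (S : Set ℕ)
    [DecidablePred (· ∈ S)] (hSub : ∀ i ∈ S, i < σ.length)
    (hdc : ∀ i j, SHB σ i j → j ∈ S → i ∈ S) :
    CorrectReordering σ ((List.range σ.length).filter (fun i => decide (i ∈ S))) := by

  set n := σ.length with hn
  set ρ := (List.range n).filter (fun i => decide (i ∈ S)) with hρ
  have hmem : ∀ i, i ∈ ρ ↔ i < n ∧ i ∈ S := by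
    intro i; simp [hρ, List.mem_filter, List.mem_range]
  have hsorted : ρ.Pairwise (·<·) := (List.pairwise_lt_range (n := n)).filter _
  have hRB : ∀ i j, RBefore ρ i j ↔ i ∈ ρ ∧ j ∈ ρ ∧ i < j := rbefore_iff ρ hsorted
  refine ⟨hsorted.nodup, fun i hi => ((hmem i).mp hi).1, ?_, ?_, ?_, ?_⟩
  · -- well-formedness
    intro l
    rcases hWF l with ⟨w, hwPL, hwpre⟩
    have hfil : σ.filter (onLock l) =
        ((List.range n).filter (fun i => onLock l (evAt σ i))).map (evAt σ) := by
      conv_lhs => rw [← map_evAt_range σ]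
      exact List.filter_map (f := evAt σ) (l := List.range n)
    set L := (List.range n).filter (fun i => onLock l (evAt σ i)) with hL
    have hLsorted : L.Pairwise (·<·) := (List.pairwise_lt_range (n := n)).filter _
    have hLlen : ∀ k ∈ L, k < σ.length := by
      intro k hk
      have := (List.mem_filter.mp hk).1
      simpa [hn] using List.mem_range.mp this
    have key : (ρ.map (evAt σ)).filter (onLock l) =
        (L.filter (fun i => decide (i ∈ S))).map (evAt σ) := by
      rw [List.filter_map (f := evAt σ) (l := ρ)]
      congr 1
      simp only [hρ, hL, List.filter_filter]
      apply List.filter_congr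
      intro i _
      simp [Bool.and_comm]
    rw [key]
    rw [hfil] at hwpre
    exact alt_lemma σ S hdc l w hwPL L hLsorted hLlen hwpre
  · -- TO downward closed
    intro i j hto hj
    rcases hto with ⟨hij, hjlen, hth⟩
    have hjS : j ∈ S := ((hmem j).mp hj).2
    have hiS : i ∈ S := hdc i j (SHB.hb (HB.to ⟨hij, hjlen, hth⟩)) hjS
    exact (hmem i).mpr ⟨hSub i hiS, hiS⟩
  · -- TO respected
    intro i j hi hj hne hto
    rcases hto with ⟨hij, _, _⟩
    exact (hRB i j).mpr ⟨hi, hj, lt_of_le_of_ne hij hne⟩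
  · -- last writes
    intro j x hread hj i
    have hjS : j ∈ S := ((hmem j).mp hj).2
    constructor
    · rintro ⟨x', hwi, hrj, hbij, hnone⟩
      have hij : i < j := ((hRB i j).mp hbij).2.2
      refine ⟨x', hwi, hrj, hij, ?_⟩
      intro k hik hkj hwk
      have hkS : k ∈ S := hdc k j (SHB.wr hwk hrj hkj) hjS
      have hkρ : k ∈ ρ := (hmem k).mpr ⟨hwk.1, hkS⟩
      have hiρ : i ∈ ρ := ((hRB i j).mp hbij).1
      exact hnone k hwk ⟨(hRB i k).mpr ⟨hiρ, hkρ, hik⟩, (hRB k j).mpr ⟨hkρ, hj, hkj⟩⟩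
    · rintro ⟨x', hwi, hrj, hij, hno⟩
      have hiS : i ∈ S := hdc i j (SHB.wr hwi hrj hij) hjS
      have hiρ : i ∈ ρ := (hmem i).mpr ⟨hwi.1, hiS⟩
      refine ⟨x', hwi, hrj, (hRB i j).mpr ⟨hiρ, hj, hij⟩, ?_⟩
      rintro k hwk ⟨hb1, hb2⟩
      have h1 : i < k := ((hRB i k).mp hb1).2.2
      have h2 : k < j := ((hRB k j).mp hb2).2.2
      exact hno k h1 h2 hwk
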